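/- arXiv:2211.11328 — 2 statements merged into one kernel-verified Lean document; each statement's English description precedes it below -/
import Mathlib

section
/- Cross-bucket Frobenius norm bound: Let S₁, S₂ ⊆ [-1/2, 1/2] be finite sets of frequencies with minimum pairwise wrap-around distance between S₁ and S₂ equal to w > 0, let D₁, D₂ be diagonal matrices with nonnegative entries whose traces are each at most λ, and let F_{S₁}, F_{S₂} be the matrices whose columns are the frequency vectors of S₁ and S₂ respectively. Then ‖D₁^{1/2} F_{S₁}^* F_{S₂} D₂^{1/2}‖_F ≤ C·λ/w for some universal constant C. -/
open Complex Finset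

lemma aux_abs_exp_sub_one (θ : ℝ) :
    ‖Complex.exp ((θ : ℂ) * Complex.I) - 1‖ = 2 * |Real.sin (θ / 2)| := by
  set c : ℂ := ((θ / 2 : ℝ) : ℂ) with hc
  have h1 : Complex.exp ((θ : ℂ) * Complex.I) = Complex.exp (c * Complex.I) * Complex.exp (c * Complex.I) := by
    rw [← Complex.exp_add]
    congr 1
    rw [hc]
    push_cast
    ring
  have h0 : (1 : ℂ) = Complex.exp (c * Complex.I) * Complex.exp (-(c * Complex.I)) := by
    rw [← Complex.exp_add]
    simp
  have h2 : Complex.exp (c * Complex.I) - Complex.exp (-(c * Complex.I))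
      = 2 * Complex.sin c * Complex.I := by
    rw [Complex.sin]
    have hI : Complex.I ^ 2 = -1 := Complex.I_sq
    ring_nf
    linear_combination (Complex.exp (c * Complex.I) - Complex.exp (-(c * Complex.I))) * hI
  have key : Complex.exp ((θ : ℂ) * Complex.I) - 1
      = Complex.exp (c * Complex.I) * (2 * Complex.sin c * Complex.I) := by
    calc Complex.exp ((θ : ℂ) * Complex.I) - 1
        = Complex.exp (c * Complex.I) * Complex.exp (c * Complex.I)
          - Complex.exp (c * Complex.I) * Complex.exp (-(c * Complex.I)) := by
          rw [← h1, ← h0]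
      _ = Complex.exp (c * Complex.I) * (Complex.exp (c * Complex.I) - Complex.exp (-(c * Complex.I))) := by ring
      _ = Complex.exp (c * Complex.I) * (2 * Complex.sin c * Complex.I) := by rw [h2]
  rw [key, norm_mul]
  rw [hc, Complex.norm_exp_ofReal_mul_I, one_mul, ← Complex.ofReal_sin]
  simp only [norm_mul, Complex.norm_two, Complex.norm_I, mul_one]
  congr 1
  exact (Complex.norm_real _).trans (Real.norm_eq_abs _)

lemma aux_two_mul_le_sin {t : ℝ} (h0 : 0 ≤ t) (h1 : t ≤ 1 / 2) :
    2 * t ≤ Real.sin (Real.pi * t) := by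
  have hpi := Real.pi_pos
  have h := Real.mul_le_sin (x := Real.pi * t) (by positivity) (by nlinarith)
  calc 2 * t = 2 / Real.pi * (Real.pi * t) := by field_simp
    _ ≤ Real.sin (Real.pi * t) := h

lemma aux_sin_lower {x w : ℝ} (hw : 0 ≤ w) (h1 : w ≤ |x|) (h2 : w ≤ 1 - |x|) :
    2 * w ≤ |Real.sin (Real.pi * x)| := by
  have hx0 : (0:ℝ) ≤ |x| := abs_nonneg x
  have hx1 : |x| ≤ 1 := by linarith
  have habs : |Real.sin (Real.pi * x)| = |Real.sin (Real.pi * |x|)| := by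
    rcases le_or_gt 0 x with h | h
    · rw [_root_.abs_of_nonneg h]
    · rw [_root_.abs_of_neg h, mul_neg, Real.sin_neg, abs_neg]
  have hnn : |Real.sin (Real.pi * |x|)| = Real.sin (Real.pi * |x|) := by
    refine abs_of_nonneg (Real.sin_nonneg_of_nonneg_of_le_pi (by positivity) ?_)
    nlinarith [Real.pi_pos]
  rw [habs, hnn]
  rcases le_or_gt |x| (1/2) with h | h
  · calc 2 * w ≤ 2 * |x| := by linarith
      _ ≤ Real.sin (Real.pi * |x|) := aux_two_mul_le_sin hx0 h
  · have hs : Real.sin (Real.pi * |x|) = Real.sin (Real.pi * (1 - |x|)) := by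
      rw [← Real.sin_pi_sub]; ring_nf
    rw [hs]
    calc 2 * w ≤ 2 * (1 - |x|) := by linarith
      _ ≤ Real.sin (Real.pi * (1 - |x|)) := aux_two_mul_le_sin (by linarith) (by linarith)

lemma aux_inner_bound (d : ℕ) {f g w : ℝ} (hw : 0 < w)
    (h1 : w ≤ |f - g|) (h2 : w ≤ 1 - |f - g|) :
    ‖∑ j : Fin d,
        (starRingEnd ℂ) (Complex.exp (2 * Real.pi * Complex.I * f * (j : ℕ))) *
          Complex.exp (2 * Real.pi * Complex.I * g * (j : ℕ))‖ ≤ 1 / (2 * w) := by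
  set θ : ℝ := 2 * Real.pi * (g - f) with hθ
  set z : ℂ := Complex.exp ((θ : ℂ) * Complex.I) with hz
  have hterm : ∀ j : ℕ,
      (starRingEnd ℂ) (Complex.exp (2 * Real.pi * Complex.I * f * (j : ℕ))) *
        Complex.exp (2 * Real.pi * Complex.I * g * (j : ℕ)) = z ^ j := by
    intro j
    rw [hz, ← Complex.exp_conj, ← Complex.exp_add, ← Complex.exp_nat_mul]
    congr 1
    simp only [map_mul, Complex.conj_I, Complex.conj_ofReal, map_ofNat, map_natCast]
    rw [hθ]
    push_cast
    ring
  have hsum : (∑ j : Fin d,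
      (starRingEnd ℂ) (Complex.exp (2 * Real.pi * Complex.I * f * (j : ℕ))) *
        Complex.exp (2 * Real.pi * Complex.I * g * (j : ℕ)))
      = ∑ j ∈ Finset.range d, z ^ j := by
    rw [← Fin.sum_univ_eq_sum_range (fun j => z ^ j) d]
    exact Finset.sum_congr rfl fun j _ => hterm j
  have hz1 : z ≠ 1 := by
    intro h
    rw [hz, Complex.exp_eq_one_iff] at h
    obtain ⟨n, hn⟩ := h
    have him := congrArg Complex.im hn
    simp [Complex.mul_im, Complex.mul_re] at him
    -- him : θ = n * (2 * π)  (in some form)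
    have hgf : g - f = n := by
      have hπ : (0:ℝ) < Real.pi := Real.pi_pos
      have : 2 * Real.pi * (g - f) = n * (2 * Real.pi) := by rw [← hθ]; linarith [him]
      nlinarith
    have habs : |f - g| = |(n : ℝ)| := by rw [abs_sub_comm, hgf]
    rcases eq_or_ne n 0 with h0 | h0
    · have h3 : |f - g| = 0 := by rw [habs, h0]; simp
      rw [h3] at h1; linarith
    · have : (1:ℝ) ≤ |(n : ℝ)| := by
        rw [← Int.cast_abs]
        exact_mod_cast Int.one_le_abs h0
      rw [habs] at h2; linarith
  have habsz : ‖z‖ = 1 := by rw [hz]; exact Complex.norm_exp_ofReal_mul_I θ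
  have hnum : ‖z ^ d - 1‖ ≤ 2 := by
    calc ‖z ^ d - 1‖ ≤ ‖z ^ d‖ + ‖(1 : ℂ)‖ :=
          norm_sub_le _ _
      _ = 2 := by rw [norm_pow, habsz]; norm_num
  have hden : 4 * w ≤ ‖z - 1‖ := by
    rw [hz, aux_abs_exp_sub_one]
    have : θ / 2 = Real.pi * (g - f) := by rw [hθ]; ring
    rw [this]
    have := aux_sin_lower (x := g - f) hw.le (by rw [abs_sub_comm]; exact h1)
      (by rw [abs_sub_comm]; exact h2)
    linarith
  rw [hsum, geom_sum_eq hz1, norm_div]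
  calc ‖z ^ d - 1‖ / ‖z - 1‖ ≤ 2 / (4 * w) :=
        div_le_div₀ (by norm_num) hnum (by positivity) hden
    _ = 1 / (2 * w) := by rw [div_eq_div_iff (by positivity) (by positivity)]; ring

/-- Cross-bucket Frobenius norm bound: there is a universal constant `C > 0`
such that for finite frequency sets `S₁, S₂ ⊆ [-1/2, 1/2]` whose minimum pairwise
wrap-around distance is at least `w > 0`, and nonnegative weights `a₁, a₂` with
`Σ_{S₁} a₁ ≤ lam` and `Σ_{S₂} a₂ ≤ lam`, the matrix `D₁^{1/2} F_{S₁}^* F_{S₂} D₂^{1/2}`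
(with entry `√(a₁ f)·√(a₂ g)·v(f)^* v(g)`) has Frobenius norm at most `C·lam/w`. -/
theorem cross_bucket_frobenius_bound :
    ∃ C : ℝ, 0 < C ∧
      ∀ (d : ℕ) (S₁ S₂ : Finset ℝ) (a₁ a₂ : ℝ → ℝ) (lam w : ℝ),
        (∀ f ∈ S₁, f ∈ Set.Icc (-(1 / 2) : ℝ) (1 / 2)) →
        (∀ g ∈ S₂, g ∈ Set.Icc (-(1 / 2) : ℝ) (1 / 2)) →
        0 < w →
        (∀ f ∈ S₁, ∀ g ∈ S₂, w ≤ min |f - g| (1 - |f - g|)) →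
        (∀ f ∈ S₁, 0 ≤ a₁ f) → (∀ g ∈ S₂, 0 ≤ a₂ g) →
        (∑ f ∈ S₁, a₁ f) ≤ lam → (∑ g ∈ S₂, a₂ g) ≤ lam →
        Real.sqrt (∑ f ∈ S₁, ∑ g ∈ S₂,
            (‖((Real.sqrt (a₁ f) * Real.sqrt (a₂ g) : ℝ) : ℂ) *
              ∑ j : Fin d,
                (starRingEnd ℂ) (Complex.exp (2 * Real.pi * Complex.I * f * (j : ℕ))) *
                  Complex.exp (2 * Real.pi * Complex.I * g * (j : ℕ))‖) ^ 2)
          ≤ C * lam / w := by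
  refine ⟨1, one_pos, ?_⟩
  intro d S₁ S₂ a₁ a₂ lam w _ _ hw hsep ha₁ ha₂ hl₁ hl₂
  have hlam : 0 ≤ lam := le_trans (Finset.sum_nonneg fun f hf => ha₁ f hf) hl₁
  have hbound : (∑ f ∈ S₁, ∑ g ∈ S₂,
      (‖((Real.sqrt (a₁ f) * Real.sqrt (a₂ g) : ℝ) : ℂ) *
        ∑ j : Fin d,
          (starRingEnd ℂ) (Complex.exp (2 * Real.pi * Complex.I * f * (j : ℕ))) *
            Complex.exp (2 * Real.pi * Complex.I * g * (j : ℕ))‖) ^ 2)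
      ≤ (lam / (2 * w)) ^ 2 := by
    have step : ∀ f ∈ S₁, ∀ g ∈ S₂,
        (‖((Real.sqrt (a₁ f) * Real.sqrt (a₂ g) : ℝ) : ℂ) *
          ∑ j : Fin d,
            (starRingEnd ℂ) (Complex.exp (2 * Real.pi * Complex.I * f * (j : ℕ))) *
              Complex.exp (2 * Real.pi * Complex.I * g * (j : ℕ))‖) ^ 2
          ≤ a₁ f * a₂ g * (1 / (2 * w)) ^ 2 := by
      intro f hf g hg
      have hsep' := hsep f hf g hg
      have hs1 : w ≤ |f - g| := le_trans hsep' (min_le_left _ _)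
      have hs2 : w ≤ 1 - |f - g| := le_trans hsep' (min_le_right _ _)
      have hin := aux_inner_bound d hw hs1 hs2
      rw [norm_mul, Complex.norm_real, Real.norm_eq_abs,
        _root_.abs_of_nonneg (mul_nonneg (Real.sqrt_nonneg _) (Real.sqrt_nonneg _)), mul_pow]
      have hsq : (Real.sqrt (a₁ f) * Real.sqrt (a₂ g)) ^ 2 = a₁ f * a₂ g := by
        rw [mul_pow, Real.sq_sqrt (ha₁ f hf), Real.sq_sqrt (ha₂ g hg)]
      rw [hsq]
      exact mul_le_mul_of_nonneg_left
        (pow_le_pow_left₀ (norm_nonneg _) hin 2)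
        (mul_nonneg (ha₁ f hf) (ha₂ g hg))
    calc (∑ f ∈ S₁, ∑ g ∈ S₂,
        (‖((Real.sqrt (a₁ f) * Real.sqrt (a₂ g) : ℝ) : ℂ) *
          ∑ j : Fin d,
            (starRingEnd ℂ) (Complex.exp (2 * Real.pi * Complex.I * f * (j : ℕ))) *
              Complex.exp (2 * Real.pi * Complex.I * g * (j : ℕ))‖) ^ 2)
        ≤ ∑ f ∈ S₁, ∑ g ∈ S₂, a₁ f * a₂ g * (1 / (2 * w)) ^ 2 :=
          Finset.sum_le_sum fun f hf => Finset.sum_le_sum fun g hg => step f hf g hg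
      _ = (∑ f ∈ S₁, a₁ f) * (∑ g ∈ S₂, a₂ g) * (1 / (2 * w)) ^ 2 := by
          simp_rw [← Finset.sum_mul, ← Finset.mul_sum]; rw [← Finset.sum_mul]
      _ ≤ lam * lam * (1 / (2 * w)) ^ 2 := by
          apply mul_le_mul_of_nonneg_right _ (by positivity)
          exact mul_le_mul hl₁ hl₂ (Finset.sum_nonneg fun g hg => ha₂ g hg) hlam
      _ = (lam / (2 * w)) ^ 2 := by field_simp
  calc Real.sqrt (∑ f ∈ S₁, ∑ g ∈ S₂,
      (‖((Real.sqrt (a₁ f) * Real.sqrt (a₂ g) : ℝ) : ℂ) *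
        ∑ j : Fin d,
          (starRingEnd ℂ) (Complex.exp (2 * Real.pi * Complex.I * f * (j : ℕ))) *
            Complex.exp (2 * Real.pi * Complex.I * g * (j : ℕ))‖) ^ 2)
      ≤ Real.sqrt ((lam / (2 * w)) ^ 2) := Real.sqrt_le_sqrt hbound
    _ = lam / (2 * w) := Real.sqrt_sq (by positivity)
    _ ≤ 1 * lam / w := by
        rw [one_mul]
        gcongr
        · linarith
end

section
/- Bicriteria gap for 3×3 Toeplitz low-rank approximation: let T be the 3×3 symmetric Toeplitz matrix with first column (2,1,0). The best rank-1 approximation of T in Frobenius norm is T₁ = ((2+√2)/4)·[[1,√2,1],[√2,2,√2],[1,√2,1]], and the best rank-1 Toeplitz approximation of T is T_{1,toep} = (10/9)·J where J is the all-ones 3×3 matrix. Moreover ‖T - T_{1,toep}‖_F > ‖T - T₁‖_F. -/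
open Finset Matrix Module

/-- Frobenius norm of a real 3×3 matrix. -/
noncomputable def frob (M : Matrix (Fin 3) (Fin 3) ℝ) : ℝ :=
  Real.sqrt (∑ i : Fin 3, ∑ j : Fin 3, (M i j) ^ 2)

/-- `M` is Toeplitz: entries depend only on `i - j`. -/
def IsToeplitz (M : Matrix (Fin 3) (Fin 3) ℝ) : Prop :=
  ∀ i j k l : Fin 3, (i : ℤ) - (j : ℤ) = (k : ℤ) - (l : ℤ) → M i j = M k l

lemma outer_rank_le_one {B : Matrix (Fin 3) (Fin 3) ℝ} {u v : Fin 3 → ℝ}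
    (h : ∀ i j, B i j = u i * v j) : B.rank ≤ 1 := by
  have hle : LinearMap.range B.mulVecLin ≤ Submodule.span ℝ {u} := by
    rintro x ⟨y, rfl⟩
    have hx : B.mulVecLin y = (∑ j, v j * y j) • u := by
      funext i
      simp only [Matrix.mulVecLin_apply, Matrix.mulVec, dotProduct, Pi.smul_apply,
        smul_eq_mul, Finset.sum_mul, Finset.mul_sum]
      refine Finset.sum_congr rfl fun j _ => ?_
      simp only [h i j]; ring
    rw [hx]
    exact Submodule.smul_mem _ _ (Submodule.mem_span_singleton_self u)
  calc B.rank = finrank ℝ (LinearMap.range B.mulVecLin) := rfl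
    _ ≤ finrank ℝ (Submodule.span ℝ ({u} : Set (Fin 3 → ℝ))) := Submodule.finrank_mono hle
    _ ≤ 1 := by simpa using finrank_span_le_card ({u} : Set (Fin 3 → ℝ))

lemma exists_outer {B : Matrix (Fin 3) (Fin 3) ℝ} (h : B.rank ≤ 1) :
    ∃ u v : Fin 3 → ℝ, ∀ i j, B i j = u i * v j := by
  have h' : finrank ℝ (LinearMap.range B.mulVecLin) ≤ 1 := h
  obtain ⟨u₀, hu₀⟩ := finrank_le_one_iff.mp h'
  have hcol : ∀ j : Fin 3, ∃ c : ℝ, c • (u₀ : Fin 3 → ℝ) = B.mulVec (Pi.single j 1) := by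
    intro j
    obtain ⟨c, hc⟩ := hu₀ ⟨B.mulVec (Pi.single j 1), ⟨Pi.single j 1, rfl⟩⟩
    exact ⟨c, congrArg Subtype.val hc⟩
  choose v hv using hcol
  refine ⟨(u₀ : Fin 3 → ℝ), v, fun i j => ?_⟩
  have := congrFun (hv j) i
  simp only [Pi.smul_apply, smul_eq_mul, Matrix.mulVec_single_one, Matrix.col_apply, mul_one] at this
  rw [← this]; ring

lemma keyEig (r a1 a2 a3 b1 b2 b3 : ℝ) (hr : r^2 = 2) (hr0 : 0 < r) :
    0 ≤ (a1^2+a2^2+a3^2)*(b1^2+b2^2+b3^2)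
      - 2*((2+r)*a1*b1 + 2*a2*b2 + (2-r)*a3*b3) + (2+r)^2 := by
  have hr2 : r ≤ 2 := by nlinarith
  obtain ⟨t, ht_def⟩ : ∃ t, t = |a1*b1| + |a2*b2| + |a3*b3| := ⟨_, rfl⟩
  have ht : 0 ≤ t := by rw [ht_def]; positivity
  have hS : (2+r)*a1*b1 + 2*a2*b2 + (2-r)*a3*b3 ≤ (2+r) * t := by
    rw [ht_def]
    have l1 := le_abs_self (a1*b1)
    have l2 := le_abs_self (a2*b2)
    have l3 := le_abs_self (a3*b3)
    have n2 := abs_nonneg (a2*b2)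
    have n3 := abs_nonneg (a3*b3)
    nlinarith
  have hC : t^2 ≤ (a1^2+a2^2+a3^2)*(b1^2+b2^2+b3^2) := by
    have e1 : |a1*b1| = |a1| * |b1| := abs_mul _ _
    have e2 : |a2*b2| = |a2| * |b2| := abs_mul _ _
    have e3 : |a3*b3| = |a3| * |b3| := abs_mul _ _
    have s1 : |a1|^2 = a1^2 := sq_abs _
    have s2 : |a2|^2 = a2^2 := sq_abs _
    have s3 : |a3|^2 = a3^2 := sq_abs _
    have s4 : |b1|^2 = b1^2 := sq_abs _
    have s5 : |b2|^2 = b2^2 := sq_abs _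
    have s6 : |b3|^2 = b3^2 := sq_abs _
    rw [ht_def, e1, e2, e3]
    nlinarith [sq_nonneg (|a1| * |b2| - |a2| * |b1|), sq_nonneg (|a1| * |b3| - |a3| * |b1|),
      sq_nonneg (|a2| * |b3| - |a3| * |b2|), s1, s2, s3, s4, s5, s6]
  nlinarith [sq_nonneg (t - (2+r)), hS, hC, ht, hr0]

lemma keyA (r u0 u1 u2 v0 v1 v2 : ℝ) (hr : r^2 = 2) (hr0 : 0 < r) :
    10 - 4*r ≤ (2 - u0*v0)^2 + (1 - u0*v1)^2 + (u0*v2)^2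
      + (1 - u1*v0)^2 + (2 - u1*v1)^2 + (1 - u1*v2)^2
      + (u2*v0)^2 + (1 - u2*v1)^2 + (2 - u2*v2)^2 := by
  have key := keyEig r ((u0+r*u1+u2)/2) (r*(u0-u2)/2) ((u0-r*u1+u2)/2)
      ((v0+r*v1+v2)/2) (r*(v0-v2)/2) ((v0-r*v1+v2)/2) hr hr0
  have hEq : ((2 - u0*v0)^2 + (1 - u0*v1)^2 + (u0*v2)^2
      + (1 - u1*v0)^2 + (2 - u1*v1)^2 + (1 - u1*v2)^2
      + (u2*v0)^2 + (1 - u2*v1)^2 + (2 - u2*v2)^2) - (10 - 4*r)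
      = (((u0+r*u1+u2)/2)^2+(r*(u0-u2)/2)^2+(((u0-r*u1+u2)/2))^2)
          * ((((v0+r*v1+v2)/2))^2+((r*(v0-v2)/2))^2+(((v0-r*v1+v2)/2))^2)
        - 2*((2+r)*((u0+r*u1+u2)/2)*((v0+r*v1+v2)/2)
            + 2*(r*(u0-u2)/2)*(r*(v0-v2)/2)
            + (2-r)*((u0-r*u1+u2)/2)*((v0-r*v1+v2)/2)) + (2+r)^2 := by
    linear_combination (-( (u0^2+u1^2+u2^2)*(v1^2/2 + (v0-v2)^2/4)
      + (v0^2+v1^2+v2^2)*(u1^2/2 + (u0-u2)^2/4)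
      + (u1^2/2 + (u0-u2)^2/4)*(v1^2/2 + (v0-v2)^2/4)*(r^2-2)
      - 2*(u1*v1 + ((u0+u2)*v1 + (v0+v2)*u1)/2 + (u0-u2)*(v0-v2)/2) + 1 )) * hr
  linarith [key, hEq.ge, hEq.le]

lemma keyToep (a b c d e : ℝ) (h1 : b*d = a*a) (h4 : c*e = a*a) :
    44/9 ≤ 3*(2-a)^2 + 2*(1-b)^2 + 2*(1-d)^2 + c^2 + e^2 := by
  have hce : 2*a^2 ≤ c^2 + e^2 := by nlinarith [sq_nonneg (c-e)]
  have hq : 4*a^2 ≤ (b+d)^2 := by nlinarith [sq_nonneg (b-d)]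
  rcases le_or_gt (b+d) 0 with h | h
  · have ha : 2*a ≤ -(b+d) := by nlinarith [sq_nonneg (b+d+2*a)]
    nlinarith [sq_nonneg (b+d+1/2), sq_nonneg a, hce, h1, sq_nonneg (b-d)]
  · have ha : 2*a ≤ b+d := by nlinarith
    nlinarith [hce, h1, sq_nonneg (b-d), ha,
      sq_nonneg (3*a + (4/3)*((b+d) - 2*a) - 10/3), sq_nonneg ((b+d) - 2*a)]

/-- Bicriteria gap for 3×3 Toeplitz low-rank approximation: for
`T = [[2,1,0],[1,2,1],[0,1,2]]`, the matrix `T₁ = ((2+√2)/4)·[[1,√2,1],[√2,2,√2],[1,√2,1]]`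
is the best rank-≤1 approximation of `T` in Frobenius norm, the matrix
`T_{1,toep} = (10/9)·J` (all-ones `J`) is the best rank-≤1 Toeplitz approximation of `T`,
and `‖T - T_{1,toep}‖_F > ‖T - T₁‖_F`. -/
theorem bicriteria_gap_3x3
    (T : Matrix (Fin 3) (Fin 3) ℝ) (hT : T = !![2, 1, 0; 1, 2, 1; 0, 1, 2])
    (T₁ : Matrix (Fin 3) (Fin 3) ℝ)
    (hT₁ : T₁ = ((2 + Real.sqrt 2) / 4) •
      !![1, Real.sqrt 2, 1; Real.sqrt 2, 2, Real.sqrt 2; 1, Real.sqrt 2, 1])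
    (Ttoep : Matrix (Fin 3) (Fin 3) ℝ)
    (hTtoep : Ttoep = (10 / 9 : ℝ) • !![1, 1, 1; 1, 1, 1; 1, 1, 1]) :
    T₁.rank ≤ 1 ∧
    (∀ B : Matrix (Fin 3) (Fin 3) ℝ, B.rank ≤ 1 → frob (T - T₁) ≤ frob (T - B)) ∧
    Ttoep.rank ≤ 1 ∧ IsToeplitz Ttoep ∧
    (∀ B : Matrix (Fin 3) (Fin 3) ℝ, B.rank ≤ 1 → IsToeplitz B →
      frob (T - Ttoep) ≤ frob (T - B)) ∧
    frob (T - T₁) < frob (T - Ttoep) := by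
  set r := Real.sqrt 2 with hrdef
  have hr : r ^ 2 = 2 := Real.sq_sqrt (by norm_num)
  have hr0 : 0 < r := Real.sqrt_pos.mpr (by norm_num)
  have hr2 : r ≤ 3/2 := by nlinarith
  -- sum of squares of T - T₁
  have hL : (∑ i : Fin 3, ∑ j : Fin 3, ((T - T₁) i j) ^ 2) = 10 - 4*r := by
    subst hT hT₁
    simp [Fin.sum_univ_three, Matrix.sub_apply, Matrix.smul_apply, smul_eq_mul]
    ring_nf
    nlinarith [hr, sq_nonneg r]
  have hLtoep : (∑ i : Fin 3, ∑ j : Fin 3, ((T - Ttoep) i j) ^ 2) = 44/9 := by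
    subst hT hTtoep
    norm_num [Fin.sum_univ_three, Matrix.sub_apply, Matrix.smul_apply, Matrix.cons_val_two, Matrix.tail_cons, Matrix.head_cons]
  have hrank1 : T₁.rank ≤ 1 := by
    apply outer_rank_le_one (u := fun i => ((2+r)/4) * (![1, r, 1] i)) (v := ![1, r, 1])
    intro i j
    subst hT₁
    fin_cases i <;> fin_cases j <;>
      simp [Matrix.smul_apply, smul_eq_mul] <;> nlinarith [hr]
  have hrank2 : Ttoep.rank ≤ 1 := by
    apply outer_rank_le_one (u := fun _ => (10/9 : ℝ)) (v := fun _ => (1 : ℝ))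
    intro i j
    subst hTtoep
    fin_cases i <;> fin_cases j <;> simp [Matrix.vecHead, Matrix.vecTail]
  have htoep_entries : ∀ i j, Ttoep i j = 10/9 := by
    intro i j
    subst hTtoep
    fin_cases i <;> fin_cases j <;> simp [Matrix.vecHead, Matrix.vecTail]
  have htoep : IsToeplitz Ttoep := by
    intro i j k l _
    rw [htoep_entries, htoep_entries]
  refine ⟨hrank1, ?_, hrank2, htoep, ?_, ?_⟩
  · intro B hB
    obtain ⟨u, v, hout⟩ := exists_outer hB
    have hR : (∑ i : Fin 3, ∑ j : Fin 3, ((T - B) i j) ^ 2)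
        = (2 - u 0 * v 0)^2 + (1 - u 0 * v 1)^2 + (u 0 * v 2)^2
          + (1 - u 1 * v 0)^2 + (2 - u 1 * v 1)^2 + (1 - u 1 * v 2)^2
          + (u 2 * v 0)^2 + (1 - u 2 * v 1)^2 + (2 - u 2 * v 2)^2 := by
      subst hT
      simp only [Fin.sum_univ_three, Matrix.sub_apply, hout]
      norm_num [Matrix.cons_val_two, Matrix.tail_cons, Matrix.head_cons]
      ring
    unfold frob
    apply Real.sqrt_le_sqrt
    rw [hL, hR]
    exact keyA r (u 0) (u 1) (u 2) (v 0) (v 1) (v 2) hr hr0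
  · intro B hB htoepB
    obtain ⟨u, v, hout⟩ := exists_outer hB
    have e1 : u 1 * v 1 = u 0 * v 0 := by
      rw [← hout 1 1, ← hout 0 0]; exact (htoepB 0 0 1 1 (by decide)).symm
    have e2 : u 2 * v 2 = u 0 * v 0 := by
      rw [← hout 2 2, ← hout 0 0]; exact (htoepB 0 0 2 2 (by decide)).symm
    have e3 : u 1 * v 2 = u 0 * v 1 := by
      rw [← hout 1 2, ← hout 0 1]; exact (htoepB 0 1 1 2 (by decide)).symm
    have e4 : u 2 * v 1 = u 1 * v 0 := by
      rw [← hout 2 1, ← hout 1 0]; exact (htoepB 1 0 2 1 (by decide)).symm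
    have h1 : (u 0 * v 1) * (u 1 * v 0) = (u 0 * v 0) * (u 0 * v 0) := by
      linear_combination (u 0 * v 0) * e1
    have h4 : (u 0 * v 2) * (u 2 * v 0) = (u 0 * v 0) * (u 0 * v 0) := by
      linear_combination (u 0 * v 0) * e2
    have key := keyToep (u 0 * v 0) (u 0 * v 1) (u 0 * v 2) (u 1 * v 0) (u 2 * v 0) h1 h4
    have hR : (∑ i : Fin 3, ∑ j : Fin 3, ((T - B) i j) ^ 2)
        = 3*(2 - u 0 * v 0)^2 + 2*(1 - u 0 * v 1)^2 + 2*(1 - u 1 * v 0)^2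
          + (u 0 * v 2)^2 + (u 2 * v 0)^2 := by
      subst hT
      simp only [Fin.sum_univ_three, Matrix.sub_apply, hout]
      norm_num [Matrix.cons_val_two, Matrix.tail_cons, Matrix.head_cons]
      linear_combination (u 1 * v 1 + u 0 * v 0 - 4) * e1 + (u 2 * v 2 + u 0 * v 0 - 4) * e2
        + (u 1 * v 2 + u 0 * v 1 - 2) * e3 + (u 2 * v 1 + u 1 * v 0 - 2) * e4
    unfold frob
    apply Real.sqrt_le_sqrt
    rw [hLtoep, hR]
    linarith [key]
  · unfold frob
    rw [hL, hLtoep]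
    apply Real.sqrt_lt_sqrt (by nlinarith) (by nlinarith)
end
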